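/- Let φ ∈ C[0,η) ∩ C¹(0,η) be concave with φ(0) = 0 and φ' > 0 on (0,η). Suppose a_k, a_{k+1} ∈ [0, η), a_{k+1} ≤ a_k, and d_k, d_{k+1} ≥ 0 satisfy φ'(a_k) ≥ τ/d_k (with d_k > 0) and a_{k+1} + (1/(2τ)) d_{k+1}² ≤ a_k. Then 2 d_{k+1} ≤ d_k + 2(φ(a_k) - φ(a_{k+1})). -/

import Mathlib

open Set

/-- The key one-step estimate in the proximal point proof that KL implies the growth error
bound: if `φ'(a_k) ≥ τ/d_k` and `a_{k+1} + d_{k+1}²/(2τ) ≤ a_k`, then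
`2 d_{k+1} ≤ d_k + 2(φ(a_k) - φ(a_{k+1}))`. -/
theorem stmt_5
    (η τ : ℝ) (hη : 0 < η) (hτ : 0 < τ)
    (φ φ' : ℝ → ℝ)
    (hφc : ContinuousOn φ (Ico 0 η)) (hφ0 : φ 0 = 0)
    (hφconc : ConcaveOn ℝ (Ico 0 η) φ)
    (hφd : ∀ s ∈ Ioo 0 η, HasDerivAt φ (φ' s) s)
    (hφ'pos : ∀ s ∈ Ioo 0 η, 0 < φ' s)
    (a a' d d' : ℝ)
    (ha : a ∈ Ico 0 η) (ha' : a' ∈ Ico 0 η) (haa : a' ≤ a)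
    (hd : 0 < d) (hd' : 0 ≤ d')
    (hKL : τ / d ≤ φ' a)
    (hdesc : a' + 1/(2*τ) * d'^2 ≤ a) :
    2 * d' ≤ d + 2 * (φ a - φ a') := by
  rcases eq_or_lt_of_le haa with rfl | hlt
  · have h0 : d' = 0 := by
      have hle : 1/(2*τ) * d'^2 ≤ 0 := by linarith
      have h2 : 0 < 1/(2*τ) := by positivity
      have hsq : d' ^ 2 ≤ 0 := by
        by_contra hcon; push_neg at hcon
        nlinarith [mul_pos h2 hcon]
      have hle0 : d' ≤ 0 := by nlinarith [hsq]
      linarith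
    subst h0; simp; linarith
  · have hapos : 0 < a := lt_of_le_of_lt ha'.1 hlt
    have hder := hφd a ⟨hapos, ha.2⟩
    have hslope := hφconc.le_slope_of_hasDerivAt ha' ha hlt hder
    rw [slope_def_field] at hslope
    have hsub : 0 < a - a' := by linarith
    have h1 : φ' a * (a - a') ≤ φ a - φ a' := by
      rw [le_div_iff₀ hsub] at hslope; linarith
    have hτd : 0 < τ / d := by positivity
    have h2 : d'^2 / (2*d) ≤ φ a - φ a' := by
      have hgap : d'^2 / (2*τ) ≤ a - a' := by
        have heq : d'^2/(2*τ) = 1/(2*τ) * d'^2 := by ring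
        rw [heq]; linarith
      calc d'^2 / (2*d) = (τ/d) * (d'^2/(2*τ)) := by field_simp
        _ ≤ φ' a * (a - a') := by
            apply mul_le_mul hKL hgap (by positivity)
            linarith [hφ'pos a ⟨hapos, ha.2⟩]
        _ ≤ φ a - φ a' := h1
    have h4 : d'^2 ≤ 2*d*(φ a - φ a') := by
      have hmul := mul_le_mul_of_nonneg_left h2 (le_of_lt (by linarith : (0:ℝ) < 2*d))
      calc d'^2 = 2*d*(d'^2/(2*d)) := by field_simp
        _ ≤ _ := hmul
    nlinarith [h4, sq_nonneg (d - d'), hd]
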